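/- Let 0<m<1, β>1 with m+2β−2<β (i.e. β<2−m), r>0, z₀>0, and define C₀ := (z₀(β−m)/(2r(β−1)²))^{1/(β−1)}. For C>0 let ψ(z) := C/(z−z₀)^{1/(β−1)}. Then for any C > C₀, ψ is a strict subsolution of the self-similar ODE −(1/(β−1))(φ(z) + ((β−m)/2) z φ'(z)) = (φ^m)''(z) + r φ^β(z) in some right neighborhood of z₀, i.e. the left-hand side is strictly less than the right-hand side there; and for any C < C₀, ψ satisfies the opposite strict inequality (strict supersolution) in some right neighborhood of z₀. -/

import Mathlib

open Real Set Filter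

private lemma hda (c p z₀ z : ℝ) (hz : z₀ < z) :
    HasDerivAt (fun y => c * (y - z₀) ^ p) (c * p * (z - z₀) ^ (p - 1)) z := by
  have h1 : HasDerivAt (fun y : ℝ => y - z₀) 1 z := (hasDerivAt_id z).sub_const z₀
  have h2 : HasDerivAt (fun x : ℝ => x ^ p) (p * (z - z₀) ^ (p - 1)) (z - z₀) :=
    Real.hasDerivAt_rpow_const (Or.inl (ne_of_gt (sub_pos.mpr hz)))
  have h3 : HasDerivAt (fun y : ℝ => (y - z₀) ^ p) (p * (z - z₀) ^ (p - 1) * 1) z :=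
    by have h := h2.comp z h1; exact h
  have h4 := h3.const_mul c
  exact h4.congr_deriv (by ring)

private lemma deriv2_rpow (c p z₀ z : ℝ) (hz : z₀ < z) :
    deriv (deriv (fun y => c * (y - z₀) ^ p)) z = c * p * (p - 1) * (z - z₀) ^ (p - 2) := by
  have hev : deriv (fun y => c * (y - z₀) ^ p) =ᶠ[nhds z]
      fun y => c * p * (y - z₀) ^ (p - 1) := by
    filter_upwards [eventually_gt_nhds hz] with y hy
    exact (hda c p z₀ y hy).deriv
  rw [hev.deriv_eq, (hda (c * p) (p - 1) z₀ z hz).deriv]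
  have h : p - 1 - 1 = p - 2 := by ring
  rw [h]

private lemma sides (m β C z₀ z : ℝ) (hC : 0 < C) (hz : z₀ < z) :
    deriv (fun y => C * (y - z₀) ^ (-(1/(β-1)))) z
      = C * (-(1/(β-1))) * (z - z₀) ^ (-(1/(β-1)) - 1)
    ∧ deriv (deriv (fun y => (C * (y - z₀) ^ (-(1/(β-1)))) ^ m)) z
      = C ^ m * (-(1/(β-1)) * m) * (-(1/(β-1)) * m - 1) * (z - z₀) ^ (-(1/(β-1)) * m - 2)
    ∧ (C * (z - z₀) ^ (-(1/(β-1)))) ^ β = C ^ β * (z - z₀) ^ (-(1/(β-1)) * β) := by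
  refine ⟨(hda C _ z₀ z hz).deriv, ?_, ?_⟩
  · have hev : (fun y => (C * (y - z₀) ^ (-(1/(β-1)))) ^ m) =ᶠ[nhds z]
        fun y => C ^ m * (y - z₀) ^ (-(1/(β-1)) * m) := by
      filter_upwards [eventually_gt_nhds hz] with y hy
      rw [Real.mul_rpow hC.le (Real.rpow_nonneg (by linarith) _),
        ← Real.rpow_mul (by linarith : (0:ℝ) ≤ y - z₀)]
    rw [(hev.deriv).deriv_eq, deriv2_rpow _ _ _ _ hz]
  · rw [Real.mul_rpow hC.le (Real.rpow_nonneg (by linarith) _),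
      ← Real.rpow_mul (by linarith : (0:ℝ) ≤ z - z₀)]

theorem subsolution_supersolution_blowup_profile
    (m β r z₀ : ℝ) (hm0 : 0 < m) (hm1 : m < 1) (hβ : 1 < β)
    (hβm : β < 2 - m) (hr : 0 < r) (hz₀ : 0 < z₀)
    (C₀ : ℝ) (hC₀ : C₀ = (z₀ * (β - m) / (2 * r * (β - 1) ^ 2)) ^ ((1:ℝ)/(β - 1))) :
    (∀ C > C₀, ∃ δ > 0, ∀ z ∈ Ioo z₀ (z₀ + δ),
      -(1/(β-1)) * ((C * (z - z₀) ^ (-(1/(β-1)))) +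
          ((β - m)/2) * z * deriv (fun y => C * (y - z₀) ^ (-(1/(β-1)))) z)
        < deriv (deriv (fun y => (C * (y - z₀) ^ (-(1/(β-1)))) ^ m)) z
          + r * (C * (z - z₀) ^ (-(1/(β-1)))) ^ β) ∧
    (∀ C, 0 < C → C < C₀ → ∃ δ > 0, ∀ z ∈ Ioo z₀ (z₀ + δ),
      -(1/(β-1)) * ((C * (z - z₀) ^ (-(1/(β-1)))) +
          ((β - m)/2) * z * deriv (fun y => C * (y - z₀) ^ (-(1/(β-1)))) z)
        > deriv (deriv (fun y => (C * (y - z₀) ^ (-(1/(β-1)))) ^ m)) z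
          + r * (C * (z - z₀) ^ (-(1/(β-1)))) ^ β) := by
  have hβ1 : (0:ℝ) < β - 1 := by linarith
  have ha : (0:ℝ) < 1/(β-1) := by positivity
  have hbm : (0:ℝ) < β - m := by linarith
  have hX : (0:ℝ) < z₀ * (β - m) / (2 * r * (β - 1) ^ 2) := by positivity
  have hC₀pos : 0 < C₀ := by rw [hC₀]; positivity
  have hC₀pow : C₀ ^ (β - 1) = z₀ * (β - m) / (2 * r * (β - 1) ^ 2) := by
    rw [hC₀, ← Real.rpow_mul hX.le, one_div, inv_mul_cancel₀ (ne_of_gt hβ1), Real.rpow_one]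
  have hβexp : -(1/(β-1)) * β = -(1/(β-1)) - 1 := by field_simp; ring
  have hcoefu : (0:ℝ) < (-(1/(β-1)) * m) * (-(1/(β-1)) * m - 1) := by
    have h1 : (0:ℝ) < 1/(β-1) * m := mul_pos ha hm0
    nlinarith
  constructor
  · -- subsolution case: C > C₀
    intro C hCgt
    have hCpos : 0 < C := lt_trans hC₀pos hCgt
    have hCm : 0 < C ^ m := Real.rpow_pos_of_pos hCpos m
    have hpow : C₀ ^ (β - 1) < C ^ (β - 1) := Real.rpow_lt_rpow hC₀pos.le hCgt (by linarith)
    have hCβ : C ^ β = C ^ (β - 1) * C := by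
      conv_lhs => rw [show β = (β - 1) + 1 by ring]
      rw [Real.rpow_add hCpos, Real.rpow_one]
    have hsign : (1/(β-1))^2 * ((β-m)/2) * z₀ * C < r * C ^ β := by
      have h1 : r * C * C₀ ^ (β - 1) < r * C * C ^ (β - 1) :=
        mul_lt_mul_of_pos_left hpow (by positivity)
      have h2 : r * C * C₀ ^ (β - 1) = (1/(β-1))^2 * ((β-m)/2) * z₀ * C := by
        rw [hC₀pow]; field_simp
      rw [hCβ]; linarith [h1, h2]
    have hden : (0:ℝ) < (1/(β-1))^2 * ((β-m)/2) * C := by positivity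
    have hnum : (0:ℝ) < r * C ^ β - (1/(β-1))^2 * ((β-m)/2) * z₀ * C := by linarith
    refine ⟨(r * C ^ β - (1/(β-1))^2 * ((β-m)/2) * z₀ * C) / ((1/(β-1))^2 * ((β-m)/2) * C),
      div_pos hnum hden, fun z hzmem => ?_⟩
    obtain ⟨hz1, hz2⟩ := hzmem
    have ht0 : 0 < z - z₀ := sub_pos.mpr hz1
    obtain ⟨s1, s2, s3⟩ := sides m β C z₀ z hCpos hz1
    rw [s1, s2, s3, hβexp]
    have e1 : (z - z₀) ^ (-(1/(β-1))) = (z - z₀) * (z - z₀) ^ (-(1/(β-1)) - 1) := by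
      have h := Real.rpow_add ht0 1 (-(1/(β-1)) - 1)
      rw [Real.rpow_one] at h
      rw [← h]; congr 1; ring
    have e2 : (z - z₀) ^ (-(1/(β-1)) * m - 2)
        = (z - z₀) ^ (1/(β-1) - 1/(β-1) * m - 1) * (z - z₀) ^ (-(1/(β-1)) - 1) := by
      rw [← Real.rpow_add ht0]; congr 1; ring
    rw [e1, e2]
    have hs : 0 < (z - z₀) ^ (-(1/(β-1)) - 1) := Real.rpow_pos_of_pos ht0 _
    have hu : 0 ≤ (z - z₀) ^ (1/(β-1) - 1/(β-1) * m - 1) := Real.rpow_nonneg ht0.le _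
    have key : -(1/(β-1)) * C * (z - z₀) + (1/(β-1))^2 * ((β-m)/2) * z * C
        < (-(1/(β-1)) * m) * (-(1/(β-1)) * m - 1) * C ^ m
            * ((z - z₀) ^ (1/(β-1) - 1/(β-1) * m - 1)) + r * C ^ β := by
      have h6 : (1/(β-1))^2 * ((β-m)/2) * C * (z - z₀)
          < (1/(β-1))^2 * ((β-m)/2) * C
            * ((r * C ^ β - (1/(β-1))^2 * ((β-m)/2) * z₀ * C) / ((1/(β-1))^2 * ((β-m)/2) * C)) :=
        mul_lt_mul_of_pos_left (by linarith) hden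
      rw [mul_div_cancel₀ _ (ne_of_gt hden)] at h6
      linarith [mul_pos (mul_pos ha hCpos) ht0, mul_nonneg (mul_pos hcoefu hCm).le hu, h6]
    linarith [mul_lt_mul_of_pos_right key hs]
  · -- supersolution case: 0 < C < C₀
    intro C hCpos hClt
    have hCm : 0 < C ^ m := Real.rpow_pos_of_pos hCpos m
    have hpow : C ^ (β - 1) < C₀ ^ (β - 1) := Real.rpow_lt_rpow hCpos.le hClt (by linarith)
    have hCβ : C ^ β = C ^ (β - 1) * C := by
      conv_lhs => rw [show β = (β - 1) + 1 by ring]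
      rw [Real.rpow_add hCpos, Real.rpow_one]
    have hsign : r * C ^ β < (1/(β-1))^2 * ((β-m)/2) * z₀ * C := by
      have h1 : r * C * C ^ (β - 1) < r * C * C₀ ^ (β - 1) :=
        mul_lt_mul_of_pos_left hpow (by positivity)
      have h2 : r * C * C₀ ^ (β - 1) = (1/(β-1))^2 * ((β-m)/2) * z₀ * C := by
        rw [hC₀pow]; field_simp
      rw [hCβ]; linarith [h1, h2]
    have hK' : (0:ℝ) < (1/(β-1))^2 * ((β-m)/2) * z₀ * C - r * C ^ β := by linarith
    have he : (0:ℝ) < 1/(β-1) - 1/(β-1) * m - 1 := by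
      have h2 : (1:ℝ) < (1 - m)/(β - 1) := (one_lt_div hβ1).mpr (by linarith)
      have h3 : (1 - m)/(β - 1) = 1/(β-1) - 1/(β-1) * m := by ring
      linarith
    have hcont : ContinuousAt (fun t : ℝ =>
        (-(1/(β-1)) * m) * (-(1/(β-1)) * m - 1) * C ^ m * t ^ (1/(β-1) - 1/(β-1) * m - 1)
          + 1/(β-1) * C * t) 0 := by
      exact (continuousAt_const.mul
        (Real.continuousAt_rpow_const 0 _ (Or.inr he.le))).add
        (continuousAt_const.mul continuousAt_id)
    have htend : Tendsto (fun t : ℝ =>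
        (-(1/(β-1)) * m) * (-(1/(β-1)) * m - 1) * C ^ m * t ^ (1/(β-1) - 1/(β-1) * m - 1)
          + 1/(β-1) * C * t) (nhds 0) (nhds 0) := by
      convert hcont.tendsto using 2
      rw [Real.zero_rpow (ne_of_gt he)]
      ring
    have hev : ∀ᶠ t in nhds (0:ℝ),
        (-(1/(β-1)) * m) * (-(1/(β-1)) * m - 1) * C ^ m * t ^ (1/(β-1) - 1/(β-1) * m - 1)
          + 1/(β-1) * C * t < (1/(β-1))^2 * ((β-m)/2) * z₀ * C - r * C ^ β :=
      htend.eventually_lt_const hK'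
    rcases Metric.eventually_nhds_iff.mp hev with ⟨δ, hδpos, hδ⟩
    refine ⟨δ, hδpos, fun z hzmem => ?_⟩
    obtain ⟨hz1, hz2⟩ := hzmem
    have ht0 : 0 < z - z₀ := sub_pos.mpr hz1
    have hG := hδ (y := z - z₀)
      (by rw [Real.dist_eq, sub_zero, abs_of_pos ht0]; linarith)
    obtain ⟨s1, s2, s3⟩ := sides m β C z₀ z hCpos hz1
    rw [gt_iff_lt, s1, s2, s3, hβexp]
    have e1 : (z - z₀) ^ (-(1/(β-1))) = (z - z₀) * (z - z₀) ^ (-(1/(β-1)) - 1) := by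
      have h := Real.rpow_add ht0 1 (-(1/(β-1)) - 1)
      rw [Real.rpow_one] at h
      rw [← h]; congr 1; ring
    have e2 : (z - z₀) ^ (-(1/(β-1)) * m - 2)
        = (z - z₀) ^ (1/(β-1) - 1/(β-1) * m - 1) * (z - z₀) ^ (-(1/(β-1)) - 1) := by
      rw [← Real.rpow_add ht0]; congr 1; ring
    rw [e1, e2]
    have hs : 0 < (z - z₀) ^ (-(1/(β-1)) - 1) := Real.rpow_pos_of_pos ht0 _
    have key : (-(1/(β-1)) * m) * (-(1/(β-1)) * m - 1) * C ^ m
            * ((z - z₀) ^ (1/(β-1) - 1/(β-1) * m - 1)) + r * C ^ β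
        < -(1/(β-1)) * C * (z - z₀) + (1/(β-1))^2 * ((β-m)/2) * z * C := by
      have h7 : (1/(β-1))^2 * ((β-m)/2) * C * z₀ < (1/(β-1))^2 * ((β-m)/2) * C * z :=
        mul_lt_mul_of_pos_left hz1 (by positivity)
      linarith [hG, h7]
    linarith [mul_lt_mul_of_pos_right key hs]
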